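/- Let V be a finite-dimensional vector space over a finite field F and let X = (X_1,...,X_n) be a family of subspaces of V. Then X has a q-transversal if and only if for every nonempty subset J ⊆ {1,...,n} we have dim(⋂_{j∈J} X_j) + |J| ≤ dim V. (q-analog of Hall's theorem.) -/

import Mathlib

open Module Submodule

section QHallAux

variable {F V : Type*} [Field F] [AddCommGroup V] [Module F V]

private lemma rado_qhall {F V : Type*} [Field F] [AddCommGroup V] [Module F V] [FiniteDimensional F V]
    {n : ℕ} (W : Fin n → Submodule F V)
    (h : ∀ J : Finset (Fin n), J.card ≤ finrank F ↥(J.sup W)) :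
    ∃ w : Fin n → V, LinearIndependent F w ∧ ∀ j, w j ∈ W j := by
  generalize hN : (∑ j, finrank F ↥(W j)) = N
  induction N using Nat.strong_induction_on generalizing W with
  | _ N ih =>
  by_cases hd : ∀ j, finrank F ↥(W j) ≤ 1
  · -- base case: all subspaces have dimension 1
    have h1 : ∀ j, finrank F ↥(W j) = 1 := fun j =>
      le_antisymm (hd j) (by simpa [Finset.sup_singleton] using h {j})
    have hne : ∀ j, W j ≠ ⊥ := by
      intro j hbot
      have := h1 j
      rw [hbot] at this
      simp at this
    choose w hw hw0 using fun j => Submodule.exists_mem_ne_zero_of_ne_bot (hne j)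
    refine ⟨w, ?_, hw⟩
    have hspan : ∀ j, span F {w j} = W j := fun j =>
      Submodule.eq_of_le_of_finrank_le
        (by simpa [Submodule.span_le, Set.singleton_subset_iff] using hw j)
        (by rw [finrank_span_singleton (hw0 j), h1 j])
    rw [linearIndependent_iff_card_le_finrank_span]
    have hsr : span F (Set.range w) = Finset.univ.sup W := by
      rw [Submodule.span_range_eq_iSup, Finset.sup_eq_iSup]
      simp [hspan]
    have := h Finset.univ
    simp only [Finset.card_univ, Fintype.card_fin] at this
    calc Fintype.card (Fin n) = n := Fintype.card_fin n
      _ ≤ finrank F ↥(Finset.univ.sup W) := this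
      _ = (Set.range w).finrank F := by rw [Set.finrank, hsr]
  · -- step case: some subspace has dimension ≥ 2
    push_neg at hd
    obtain ⟨j, hj2⟩ := hd
    set k := finrank F ↥(W j) with hk
    let b := Module.finBasis F ↥(W j)
    have hkk : 1 < k := hj2
    let i₀ : Fin k := ⟨0, by omega⟩
    let i₁ : Fin k := ⟨1, by omega⟩
    have h01 : i₀ ≠ i₁ := by simp [i₀, i₁, Fin.ext_iff]
    let A : Submodule F ↥(W j) := span F (⇑b '' {i₀}ᶜ)
    let B : Submodule F ↥(W j) := span F (⇑b '' {i₁}ᶜ)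
    have hAB : A ⊔ B = ⊤ := by
      refine le_antisymm le_top ?_
      rw [← b.span_eq]
      refine Submodule.span_le.2 ?_
      rintro x ⟨i, rfl⟩
      by_cases hi : i = i₀
      · exact Submodule.mem_sup_right (Submodule.subset_span ⟨i, by simp [hi, h01], rfl⟩)
      · exact Submodule.mem_sup_left (Submodule.subset_span ⟨i, by simp [hi], rfl⟩)
    have hAne : A ≠ ⊤ := by
      intro htop
      have : b i₀ ∉ A := b.linearIndependent.notMem_span_image (by simp)
      rw [htop] at this
      exact this trivial
    have hBne : B ≠ ⊤ := by
      intro htop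
      have : b i₁ ∉ B := b.linearIndependent.notMem_span_image (by simp)
      rw [htop] at this
      exact this trivial
    -- the two candidate replacements
    let W₁ := A.map (W j).subtype
    let W₂ := B.map (W j).subtype
    have hmaplt : ∀ C : Submodule F ↥(W j), C ≠ ⊤ → C.map (W j).subtype < W j := by
      intro C hC
      have h1 : C.map (W j).subtype ≤ W j := by
        rintro x ⟨y, _, rfl⟩; exact y.2
      refine lt_of_le_of_ne h1 ?_
      intro heq
      apply hC
      rw [eq_top_iff]
      intro x _
      have hx : (x : V) ∈ C.map (W j).subtype := by rw [heq]; exact x.2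
      obtain ⟨y, hy, hxy⟩ := hx
      rwa [← Subtype.ext hxy]
    have hW₁lt : W₁ < W j := hmaplt A hAne
    have hW₂lt : W₂ < W j := hmaplt B hBne
    have hsup12 : W₁ ⊔ W₂ = W j := by
      rw [← Submodule.map_sup, hAB, Submodule.map_subtype_top]
    -- helper facts about updates
    have key : ∀ (W' : Submodule F V), W' < W j →
        (∀ J : Finset (Fin n), J.card ≤ finrank F ↥(J.sup (Function.update W j W'))) →
        ∃ w : Fin n → V, LinearIndependent F w ∧ ∀ i, w i ∈ W i := by
      intro W' hlt hH
      have hmeas : (∑ i, finrank F ↥(Function.update W j W' i)) < N := by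
        rw [← hN]
        have hupd : ∀ i, finrank F ↥(Function.update W j W' i) =
            Function.update (fun i => finrank F ↥(W i)) j (finrank F ↥W') i := by
          intro i
          rcases eq_or_ne i j with rfl | hij
          · rw [Function.update_self, Function.update_self]
          · rw [Function.update_of_ne hij, Function.update_of_ne hij]
        rw [Finset.sum_congr rfl fun i _ => hupd i]
        rw [Finset.sum_update_of_mem (Finset.mem_univ j)]
        rw [Finset.sum_eq_add_sum_sdiff_singleton_of_mem (Finset.mem_univ j)
          (fun i => finrank F ↥(W i))]
        exact Nat.add_lt_add_right (Submodule.finrank_lt_finrank_of_lt hlt) _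
      obtain ⟨w, hw, hmem⟩ := ih _ hmeas (Function.update W j W') hH rfl
      refine ⟨w, hw, fun i => ?_⟩
      by_cases hij : i = j
      · subst hij
        have := hmem i
        rw [Function.update_self] at this
        exact hlt.le this
      · have := hmem i
        rwa [Function.update_of_ne hij] at this
    by_cases hH1 : ∀ J : Finset (Fin n), J.card ≤ finrank F ↥(J.sup (Function.update W j W₁))
    · exact key W₁ hW₁lt hH1
    by_cases hH2 : ∀ J : Finset (Fin n), J.card ≤ finrank F ↥(J.sup (Function.update W j W₂))
    · exact key W₂ hW₂lt hH2
    -- both replacements fail: contradiction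
    exfalso
    push_neg at hH1 hH2
    obtain ⟨J₁, hJ₁⟩ := hH1
    obtain ⟨J₂, hJ₂⟩ := hH2
    have hmemJ : ∀ (W' : Submodule F V) (J : Finset (Fin n)),
        finrank F ↥(J.sup (Function.update W j W')) < J.card → j ∈ J := by
      intro W' J hJ
      by_contra hjJ
      have : J.sup (Function.update W j W') = J.sup W :=
        Finset.sup_congr rfl (fun i hi => Function.update_of_ne (by rintro rfl; exact hjJ hi) _ _)
      rw [this] at hJ
      exact absurd (h J) (by omega)
    have hj₁ : j ∈ J₁ := hmemJ W₁ J₁ hJ₁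
    have hj₂ : j ∈ J₂ := hmemJ W₂ J₂ hJ₂
    set J₁' := J₁.erase j with hJ₁'
    set J₂' := J₂.erase j with hJ₂'
    have hsupJ : ∀ (W' : Submodule F V) (J : Finset (Fin n)) (hjJ : j ∈ J),
        J.sup (Function.update W j W') = W' ⊔ (J.erase j).sup W := by
      intro W' J hjJ
      conv_lhs => rw [← Finset.insert_erase hjJ]
      rw [Finset.sup_insert, Function.update_self]
      congr 1
      exact Finset.sup_congr rfl (fun i hi =>
        Function.update_of_ne (Finset.ne_of_mem_erase hi) _ _)
    rw [hsupJ W₁ J₁ hj₁] at hJ₁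
    rw [hsupJ W₂ J₂ hj₂] at hJ₂
    have hpos₁ : 0 < J₁.card := Finset.card_pos.2 ⟨j, hj₁⟩
    have hpos₂ : 0 < J₂.card := Finset.card_pos.2 ⟨j, hj₂⟩
    have hc₁ : J₁.card = J₁'.card + 1 := by
      rw [hJ₁', Finset.card_erase_of_mem hj₁]; omega
    have hc₂ : J₂.card = J₂'.card + 1 := by
      rw [hJ₂', Finset.card_erase_of_mem hj₂]; omega
    set P₁ := W₁ ⊔ J₁'.sup W with hP₁def
    set P₂ := W₂ ⊔ J₂'.sup W with hP₂def
    have hP₁ : finrank F ↥P₁ ≤ J₁'.card := by omega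
    have hP₂ : finrank F ↥P₂ ≤ J₂'.card := by omega
    have hsub : finrank F ↥(P₁ ⊔ P₂) + finrank F ↥(P₁ ⊓ P₂)
        = finrank F ↥P₁ + finrank F ↥P₂ :=
      Submodule.finrank_sup_add_finrank_inf_eq P₁ P₂
    have hsupeq : P₁ ⊔ P₂ = W j ⊔ (J₁' ∪ J₂').sup W := by
      rw [hP₁def, hP₂def, sup_sup_sup_comm, hsup12, Finset.sup_union]
    have hjnot : j ∉ J₁' ∪ J₂' := by
      simp [hJ₁', hJ₂']
    have hlow : (J₁' ∪ J₂').card + 1 ≤ finrank F ↥(P₁ ⊔ P₂) := by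
      have := h (insert j (J₁' ∪ J₂'))
      rw [Finset.sup_insert, Finset.card_insert_of_notMem hjnot] at this
      rw [hsupeq]
      omega
    have hinf : (J₁' ∩ J₂').sup W ≤ P₁ ⊓ P₂ :=
      le_inf (le_trans (Finset.sup_mono Finset.inter_subset_left) le_sup_right)
        (le_trans (Finset.sup_mono Finset.inter_subset_right) le_sup_right)
    have hlow2 : (J₁' ∩ J₂').card ≤ finrank F ↥(P₁ ⊓ P₂) :=
      (h _).trans (Submodule.finrank_mono hinf)
    have hcards := Finset.card_union_add_card_inter J₁' J₂'
    omega

/-- Construction of a subspace `T` with the key intersection property. -/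
private lemma exists_good_qhall [FiniteDimensional F V]
    {n : ℕ} (X : Fin n → Submodule F V)
    (h : ∀ J : Finset (Fin n), J.Nonempty →
      finrank F ↥(⨅ j ∈ J, X j) + J.card ≤ finrank F V) :
    ∃ T : Submodule F V, finrank F ↥T = n ∧
      ∀ J : Finset (Fin n), J.Nonempty →
        finrank F ↥(T ⊓ ⨅ j ∈ J, X j) + J.card ≤ n := by
  classical
  set d := finrank F V with hd
  set W : Fin n → Submodule F (Module.Dual F V) := fun j => (X j).dualAnnihilator with hWdef
  have hIJ : ∀ J : Finset (Fin n), (⨅ j ∈ J, X j) = J.inf X :=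
    fun J => (Finset.inf_eq_iInf J X).symm
  have h' : ∀ J : Finset (Fin n), J.Nonempty →
      finrank F ↥(J.inf X) + J.card ≤ finrank F V := by
    intro J hJ
    have := h J hJ
    rwa [hIJ] at this
  have hsupgen : ∀ J : Finset (Fin n), (J.inf X).dualAnnihilator = J.sup W := by
    intro J
    induction J using Finset.cons_induction with
    | empty => simp [Submodule.dualAnnihilator_top]
    | cons a s ha ih =>
      rw [Finset.inf_cons, Finset.sup_cons, Subspace.dualAnnihilator_inf_eq, ih]
  have hW : ∀ J : Finset (Fin n), J.card ≤ finrank F ↥(J.sup W) := by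
    intro J
    rcases J.eq_empty_or_nonempty with rfl | hJne
    · simp
    · have hq : finrank F ↥(J.sup W) = finrank F (V ⧸ (J.inf X)) := by
        rw [← hsupgen]
        exact (LinearEquiv.finrank_eq (Subspace.quotEquivAnnihilator _)).symm
      have hq2 := Submodule.finrank_quotient_add_finrank (J.inf X)
      have := h' J hJne
      omega
  obtain ⟨φ, hφind, hφmem⟩ := rado_qhall W hW
  let Φ : V →ₗ[F] (Fin n → F) := LinearMap.pi φ
  have hker : LinearMap.ker Φ = (span F (Set.range φ)).dualCoannihilator := by
    ext x
    rw [LinearMap.mem_ker, Submodule.mem_dualCoannihilator]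
    constructor
    · intro hx ψ hψ
      induction hψ using Submodule.span_induction with
      | mem ψ hψ =>
        obtain ⟨j, rfl⟩ := hψ
        have := congrFun hx j
        simpa [Φ] using this
      | zero => simp
      | add _ _ _ _ h1 h2 => simp [h1, h2]
      | smul c _ _ h1 => simp [h1]
    · intro hx
      ext j
      exact hx (φ j) (Submodule.subset_span ⟨j, rfl⟩)
  have hkerrank : finrank F ↥(LinearMap.ker Φ) + n = d := by
    have h1 := Subspace.finrank_add_finrank_dualCoannihilator_eq (span F (Set.range φ))
    have h2 : finrank F ↥(span F (Set.range φ)) = n := by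
      rw [finrank_span_eq_card hφind, Fintype.card_fin]
    have h3 : finrank F (Module.Dual F V) = d := Subspace.dual_finrank_eq
    rw [hker]
    omega
  obtain ⟨T, hTcompl⟩ := Submodule.exists_isCompl (LinearMap.ker Φ)
  have hTrank : finrank F ↥T = n := by
    have := Submodule.finrank_add_eq_of_isCompl hTcompl
    omega
  refine ⟨T, hTrank, ?_⟩
  intro J hJne
  rw [hIJ]
  set p := T ⊓ J.inf X with hp
  -- the coordinate-restriction map
  let Ψ : (Fin n → F) →ₗ[F] (↥J → F) := LinearMap.pi (fun j => LinearMap.proj (j : Fin n))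
  have hΨsurj : Function.Surjective Ψ := by
    intro y
    refine ⟨fun i => if h : i ∈ J then y ⟨i, h⟩ else 0, ?_⟩
    ext j
    simp [Ψ, j.2]
  have hΨrank : finrank F ↥(LinearMap.ker Ψ) + J.card = n := by
    have h1 := LinearMap.finrank_range_add_finrank_ker Ψ
    have h2 : LinearMap.range Ψ = ⊤ := LinearMap.range_eq_top.2 hΨsurj
    rw [h2] at h1
    have h3 : finrank F ↥(⊤ : Submodule F (↥J → F)) = J.card := by
      rw [finrank_top, Module.finrank_pi, Fintype.card_coe]
    have h4 : finrank F (Fin n → F) = n := by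
      rw [Module.finrank_pi, Fintype.card_fin]
    omega
  -- Φ is injective on p
  have hrankp : finrank F ↥p = finrank F ↥(p.map Φ) := by
    have hkerd : LinearMap.ker (Φ.domRestrict p) = ⊥ := by
      rw [Submodule.eq_bot_iff]
      rintro ⟨x, hx⟩ hmem
      have hx1 : x ∈ LinearMap.ker Φ := hmem
      have hx2 : x ∈ T := by rw [hp] at hx; exact hx.1
      have : x = 0 := Submodule.disjoint_def.mp hTcompl.disjoint x hx1 hx2
      exact Subtype.ext this
    have h1 := LinearMap.finrank_range_add_finrank_ker (Φ.domRestrict p)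
    rw [hkerd, LinearMap.range_domRestrict] at h1
    simpa using h1.symm
  have hmaple : p.map Φ ≤ LinearMap.ker Ψ := by
    rintro _ ⟨v, hv, rfl⟩
    rw [LinearMap.mem_ker]
    ext j
    have hvX : v ∈ X (j : Fin n) := by
      have h5 : v ∈ J.inf X := by rw [hp] at hv; exact hv.2
      have h6 : J.inf X ≤ X (j : Fin n) := Finset.inf_le j.2
      exact h6 h5
    have : φ (j : Fin n) v = 0 := (Submodule.mem_dualAnnihilator _).mp (hφmem (j : Fin n)) v hvX
    simpa [Ψ, Φ] using this
  have := Submodule.finrank_mono hmaple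
  omega


end QHallAux

/-- `T` is a q-transversal of the family `X` indexed by the finite type `ι`: `T` has
dimension equal to the number of indices, and every (vector-space) basis of `T` admits a
bijective assignment `σ` onto the index set with `b i ∉ X (σ i)` for all `i`. -/
def IsQTransversal {F V ι : Type*} [Field F] [AddCommGroup V] [Module F V] [Fintype ι]
    (X : ι → Submodule F V) (T : Submodule F V) : Prop :=
  Module.finrank F T = Fintype.card ι ∧
  ∀ (m : ℕ) (b : Fin m → V), LinearIndependent F b → Submodule.span F (Set.range b) = T →
    ∃ σ : Fin m → ι, Function.Bijective σ ∧ ∀ i, b i ∉ X (σ i)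

section QHallAux2

variable {F V : Type*} [Field F] [AddCommGroup V] [Module F V]

private lemma isQTransversal_of_good [FiniteDimensional F V]
    {n : ℕ} (X : Fin n → Submodule F V) (T : Submodule F V)
    (hT : finrank F ↥T = n)
    (hP : ∀ J : Finset (Fin n), J.Nonempty →
      finrank F ↥(T ⊓ J.inf X) + J.card ≤ n) :
    IsQTransversal X T := by
  classical
  refine ⟨by simpa using hT, ?_⟩
  intro m b hb hspan
  have hm : m = n := by
    have h1 := finrank_span_eq_card hb
    rw [hspan, hT, Fintype.card_fin] at h1
    omega
  let t : Fin m → Finset (Fin n) := fun i => Finset.univ.filter (fun j => b i ∉ X j)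
  have hall : ∀ S : Finset (Fin m), S.card ≤ (S.biUnion t).card := by
    intro S
    set J : Finset (Fin n) := Finset.univ.filter (fun j => ∀ i ∈ S, b i ∈ X j) with hJdef
    have hcompl : S.biUnion t = Jᶜ := by
      ext j
      simp only [Finset.mem_biUnion, Finset.mem_compl, Finset.mem_filter, Finset.mem_univ,
        true_and, t, J]
      push_neg
      tauto
    have hSJ : S.card + J.card ≤ n := by
      rcases J.eq_empty_or_nonempty with hJe | hJne
      · have := Finset.card_le_univ S
        simp only [Finset.card_univ, Fintype.card_fin] at this
        rw [hJe]
        simpa [hm] using this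
      · have hmemp : ∀ i : ↥S, b i ∈ T ⊓ J.inf X := by
          intro i
          refine Submodule.mem_inf.2 ⟨?_, ?_⟩
          · rw [← hspan]
            exact Submodule.subset_span ⟨i, rfl⟩
          · rw [Submodule.mem_finsetInf]
            intro j hj
            have := Finset.mem_filter.mp hj
            exact this.2 i.1 i.2
        let c : ↥S → ↥(T ⊓ J.inf X) := fun i => ⟨b i, hmemp i⟩
        have hc : LinearIndependent F c := by
          have h2 : LinearIndependent F (fun i : ↥S => b i) := hb.comp _ Subtype.val_injective
          exact h2.of_comp (T ⊓ J.inf X).subtype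
        have h3 := hc.fintype_card_le_finrank
        rw [Fintype.card_coe] at h3
        have := hP J hJne
        omega
    rw [hcompl, Finset.card_compl, Fintype.card_fin]
    omega
  obtain ⟨σ, hinj, hmem⟩ := (Finset.all_card_le_biUnion_card_iff_exists_injective t).mp hall
  refine ⟨σ, ?_, fun i => by simpa [t] using hmem i⟩
  rw [Fintype.bijective_iff_injective_and_card]
  exact ⟨hinj, by simp [hm]⟩


private lemma qhall_forward [FiniteDimensional F V]
    {n : ℕ} (X : Fin n → Submodule F V) (T : Submodule F V)
    (hT : IsQTransversal X T) (J : Finset (Fin n)) (hJ : J.Nonempty) :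
    finrank F ↥(J.inf X) + J.card ≤ finrank F V := by
  classical
  obtain ⟨hT1, hT2⟩ := hT
  have hTn : finrank F ↥T = n := by simpa using hT1
  set Y := J.inf X with hY
  set p := T ⊓ Y with hp
  set S' : Submodule F ↥T := p.comap T.subtype with hS'
  obtain ⟨C, hC⟩ := Submodule.exists_isCompl S'
  set k := finrank F ↥S' with hk
  set l := finrank F ↥C with hl
  let e := Submodule.prodEquivOfIsCompl S' C hC
  let B0 : Basis (Fin k ⊕ Fin l) F ↥T :=
    ((Module.finBasis F ↥S').prod (Module.finBasis F ↥C)).map e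
  let B : Basis (Fin (k + l)) F ↥T := B0.reindex finSumFinEquiv
  let b : Fin (k + l) → V := fun i => (B i : V)
  have hb : LinearIndependent F b :=
    B.linearIndependent.map' T.subtype T.ker_subtype
  have hspan : span F (Set.range b) = T := by
    have h1 : Set.range b = T.subtype '' Set.range ⇑B := by
      rw [← Set.range_comp]; rfl
    rw [h1, Submodule.span_image, B.span_eq, Submodule.map_subtype_top]
  have hkl : k + l = n := by
    have := Submodule.finrank_add_eq_of_isCompl hC
    rw [← hk, ← hl, hTn] at this
    exact this
  obtain ⟨σ, hσbij, hσ⟩ := hT2 (k + l) b hb hspan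
  have hbl : ∀ i₀ : Fin k, b (finSumFinEquiv (Sum.inl i₀)) ∈ p := by
    intro i₀
    have h1 : B (finSumFinEquiv (Sum.inl i₀)) = B0 (Sum.inl i₀) := by
      simp [B, Basis.reindex_apply]
    set c := (Module.finBasis F ↥S') i₀ with hc
    have h2 : B0 (Sum.inl i₀) = e (c, 0) := by
      simp [B0, Basis.map_apply, Basis.prod_apply]
      exact hc.symm
    have h3 : (e (c, 0) : ↥T) = ((c : ↥T)) := by
      rw [Submodule.coe_prodEquivOfIsCompl']
      simp
    have h4 : b (finSumFinEquiv (Sum.inl i₀)) = ((c : ↥T) : V) :=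
      congrArg Subtype.val (h1.trans (h2.trans h3))
    rw [h4]
    exact c.2
  have hJσ : ∀ i₀ : Fin k, σ (finSumFinEquiv (Sum.inl i₀)) ∉ J := by
    intro i₀ hjJ
    apply hσ (finSumFinEquiv (Sum.inl i₀))
    have hle : p ≤ X (σ (finSumFinEquiv (Sum.inl i₀))) := by
      rw [hp, hY]
      exact inf_le_right.trans (Finset.inf_le hjJ)
    exact hle (hbl i₀)
  have hkcard : k + J.card ≤ n := by
    have hinj : Function.Injective (fun i₀ : Fin k => σ (finSumFinEquiv (Sum.inl i₀))) := by
      intro a b hab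
      have h1 := hσbij.injective hab
      have h2 := finSumFinEquiv.injective h1
      exact Sum.inl.inj h2
    have h3 : (Finset.univ : Finset (Fin k)).card ≤ Jᶜ.card := by
      apply Finset.card_le_card_of_injOn (fun i₀ => σ (finSumFinEquiv (Sum.inl i₀)))
      · intro a _
        exact Finset.mem_compl.2 (hJσ a)
      · exact hinj.injOn
    rw [Finset.card_univ, Fintype.card_fin, Finset.card_compl, Fintype.card_fin] at h3
    have h4 : J.card ≤ n := by
      have := Finset.card_le_univ J
      simpa using this
    omega
  have hsub : finrank F ↥(T ⊔ Y) + finrank F ↥(T ⊓ Y) = finrank F ↥T + finrank F ↥Y :=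
    Submodule.finrank_sup_add_finrank_inf_eq T Y
  have h5 : finrank F ↥(T ⊔ Y) ≤ finrank F V := Submodule.finrank_le _
  have h6 : finrank F ↥(T ⊓ Y) = k := by
    have h7 : S'.map T.subtype = T ⊓ p := Submodule.map_comap_subtype T p
    have h8 : T ⊓ p = T ⊓ Y := by rw [hp, ← inf_assoc, inf_idem]
    have h9 := Submodule.finrank_map_subtype_eq T S'
    rw [h7, h8] at h9
    rw [hk]
    exact h9
  rw [hTn] at hsub
  omega


end QHallAux2

/-- **q-analog of Hall's theorem.** The family `X = (X 1, …, X n)` of subspaces of `V`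
has a q-transversal iff for every nonempty `J ⊆ {1,…,n}` we have
`dim (⋂_{j ∈ J} X j) + |J| ≤ dim V`. -/
theorem qHall {F V : Type*} [Field F] [Fintype F]
    [AddCommGroup V] [Module F V] [FiniteDimensional F V]
    (n : ℕ) (X : Fin n → Submodule F V) :
    (∃ T : Submodule F V, IsQTransversal X T) ↔
    (∀ J : Finset (Fin n), J.Nonempty →
      Module.finrank F ↥(⨅ j ∈ J, X j) + J.card ≤ Module.finrank F V) := by
  classical
  constructor
  · rintro ⟨T, hT⟩ J hJ
    have h1 := qhall_forward X T hT J hJ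
    have heq : (⨅ j ∈ J, X j) = J.inf X := (Finset.inf_eq_iInf J X).symm
    rw [heq]
    exact h1
  · intro h
    obtain ⟨T, hTrank, hP⟩ := exists_good_qhall X h
    refine ⟨T, isQTransversal_of_good X T hTrank ?_⟩
    intro J hJ
    have h2 := hP J hJ
    have heq : (⨅ j ∈ J, X j) = J.inf X := (Finset.inf_eq_iInf J X).symm
    rw [heq] at h2
    exact h2
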